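/- A digraph X has the property that every eigenvalue λ of its Hermitian adjacency matrix H(X) satisfies λ ∈ {−1, 1} if and only if every vertex of the underlying graph Γ(X) has degree exactly 1 (that is, Γ(X) is isomorphic to a disjoint union m·K₂ of m independent edges for some m). -/

import Mathlib

open Matrix Complex

/-- Hermitian adjacency matrix of a digraph given by its arc relation `E`. -/
def hermAdj {V : Type*} (E : V → V → Prop) [DecidableRel E] : Matrix V V ℂ :=
  fun u v =>
    if E u v ∧ E v u then 1
    else if E u v then Complex.I
    else if E v u then -Complex.I
    else 0

lemma hermAdj_mul_symm {V : Type*} (E : V → V → Prop) [DecidableRel E] (v w : V) :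
    hermAdj E v w * hermAdj E w v = if (E v w ∨ E w v) then 1 else 0 := by
  unfold hermAdj
  by_cases h1 : E v w <;> by_cases h2 : E w v <;>
    simp [h1, h2, Complex.I_mul_I, mul_comm]

lemma hermAdj_eq_zero_iff {V : Type*} (E : V → V → Prop) [DecidableRel E] (v w : V) :
    hermAdj E v w = 0 ↔ ¬ (E v w ∨ E w v) := by
  unfold hermAdj
  by_cases h1 : E v w <;> by_cases h2 : E w v <;>
    simp [h1, h2, Complex.I_ne_zero]

/-- A digraph has all `H`-eigenvalues in `{-1, 1}` if and only if every vertex of its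
underlying graph has degree exactly `1` (i.e. the underlying graph is a disjoint
union of independent edges). -/
theorem stmt16 {V : Type*} [Fintype V] [DecidableEq V]
    (E : V → V → Prop) [DecidableRel E] (hirr : ∀ v, ¬ E v v)
    (hH : (hermAdj E).IsHermitian) :
    (∀ i : V, hH.eigenvalues i = 1 ∨ hH.eigenvalues i = -1) ↔
      (∀ v : V, (Finset.univ.filter (fun w => E v w ∨ E w v)).card = 1) := by
  have key : (∀ i : V, hH.eigenvalues i = 1 ∨ hH.eigenvalues i = -1) ↔
      hermAdj E * hermAdj E = 1 := by
    constructor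
    · intro h
      have hspec := hH.spectral_theorem
      set U := (hH.eigenvectorUnitary : Matrix V V ℂ) with hUdef
      have hU1 : star U * U = 1 := Matrix.mem_unitaryGroup_iff'.mp hH.eigenvectorUnitary.2
      have hU2 : U * star U = 1 := Matrix.mem_unitaryGroup_iff.mp hH.eigenvectorUnitary.2
      have hD : diagonal (RCLike.ofReal ∘ hH.eigenvalues) *
          diagonal (RCLike.ofReal ∘ hH.eigenvalues) = (1 : Matrix V V ℂ) := by
        rw [diagonal_mul_diagonal]
        ext i j
        rcases h i with hi | hi <;>
          simp [Matrix.diagonal_apply, Matrix.one_apply, hi, Function.comp]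
      set D := (diagonal (RCLike.ofReal ∘ hH.eigenvalues) : Matrix V V ℂ) with hDdef
      rw [hspec, Unitary.conjStarAlgAut_apply, ← hUdef, show (U * D * star U) * (U * D * star U)
            = U * (D * ((star U * U) * (D * star U))) from by
          simp only [Matrix.mul_assoc], hU1, one_mul, ← Matrix.mul_assoc D D, hD,
        one_mul, hU2]
    · intro h i
      have hv := hH.mulVec_eigenvectorBasis i
      have h2 : (hermAdj E * hermAdj E) *ᵥ ⇑(hH.eigenvectorBasis i) =
          (hH.eigenvalues i • hH.eigenvalues i • (1:ℝ)) • ⇑(hH.eigenvectorBasis i) := by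
        rw [← Matrix.mulVec_mulVec, hv, Matrix.mulVec_smul, hv]
        simp [smul_smul]
      rw [h, Matrix.one_mulVec] at h2
      have hne : ⇑(hH.eigenvectorBasis i) ≠ 0 := by
        intro hc
        apply hH.eigenvectorBasis.orthonormal.ne_zero i
        ext x
        exact congrFun hc x
      obtain ⟨x, hx⟩ := Function.ne_iff.mp hne
      have hx2 := congrFun h2 x
      simp only [smul_smul, smul_eq_mul, mul_one, Pi.smul_apply, Complex.real_smul,
        Complex.ofReal_mul] at hx2
      have hsqC : ((hH.eigenvalues i : ℂ) * (hH.eigenvalues i : ℂ)) = 1 := by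
        apply mul_right_cancel₀ hx
        rw [one_mul]
        exact hx2.symm
      have hsq : hH.eigenvalues i * hH.eigenvalues i = 1 := by exact_mod_cast hsqC
      rcases mul_self_eq_one_iff.mp hsq with h1 | h1
      · exact Or.inl h1
      · exact Or.inr h1
  rw [key]
  constructor
  · intro h v
    have hdiag := congrFun (congrFun h v) v
    have : (hermAdj E * hermAdj E) v v =
        ((Finset.univ.filter (fun w => E v w ∨ E w v)).card : ℂ) := by
      rw [Matrix.mul_apply]
      rw [Finset.sum_congr rfl (fun w _ => hermAdj_mul_symm E v w)]
      simp [Finset.sum_ite_eq, Finset.sum_boole]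
    rw [this] at hdiag
    have : ((Finset.univ.filter (fun w => E v w ∨ E w v)).card : ℂ) = 1 := by
      rw [hdiag]; simp
    exact_mod_cast this
  · intro h
    ext u v
    rw [Matrix.mul_apply]
    by_cases huv : u = v
    · subst huv
      rw [Finset.sum_congr rfl (fun w _ => hermAdj_mul_symm E u w)]
      simp [Finset.sum_boole, h u, Matrix.one_apply]
    · have : ∀ w ∈ Finset.univ, hermAdj E u w * hermAdj E w v = 0 := by
        intro w _
        by_cases h1 : hermAdj E u w = 0
        · rw [h1, zero_mul]
        by_cases h2 : hermAdj E w v = 0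
        · rw [h2, mul_zero]
        exfalso
        rw [hermAdj_eq_zero_iff, not_not] at h1 h2
        have hsub : {u, v} ⊆ Finset.univ.filter (fun x => E w x ∨ E x w) := by
          intro x hx
          simp only [Finset.mem_insert, Finset.mem_singleton] at hx
          rcases hx with rfl | rfl <;> simp [Finset.mem_filter] <;> tauto
        have := Finset.card_le_card hsub
        rw [h w, Finset.card_insert_of_notMem (by simp [huv]), Finset.card_singleton] at this
        omega
      rw [Finset.sum_congr rfl this]
      simp [Matrix.one_apply, huv]
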